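/- Let φ be an indecomposable 𝔖∞-central state on G = Γ≀𝔖∞ with GNS triple (π, H, ξ), and let O_j, 𝔄_j and φ_{j,k} be as defined. Let m ≥ 2, let k₁, ..., k_m be distinct elements of ℕ, and let s_p ∈ 𝔖∞ be the cycle defined by s_p(k_{l+1}) = k_l for 1 ≤ l ≤ m−1, s_p(k₁) = k_m, and s_p(i) = i for i ∉ {k₁,...,k_m}. If U_{k_i} ∈ 𝔄_{k_i} for i = 1, ..., m, then ⟨π(s_p)·U_{k₁}U_{k₂}⋯U_{k_m} ξ, ξ⟩ = ⟨φ_{k_m,k₁}(U_{k₁})·O_{k_m}·φ_{k_m,k₂}(U_{k₂})·O_{k_m}⋯φ_{k_m,k_{m−1}}(U_{k_{m−1}})·O_{k_m}·U_{k_m} ξ, ξ⟩. -/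

import Mathlib

open scoped Classical ComplexOrder
open Filter Topology

noncomputable section

namespace DN

local notation "⟪" x ", " y "⟫" => @inner ℂ _ _ x y

/-- The group `𝔖∞` of finitely supported permutations of `ℕ`. -/
def SInf : Subgroup (Equiv.Perm ℕ) where
  carrier := {s | {i | s i ≠ i}.Finite}
  one_mem' := by simp
  mul_mem' := by
    intro s t hs ht
    refine Set.Finite.subset (hs.union ht) fun i hi => ?_
    simp only [Set.mem_setOf_eq, Set.mem_union, Equiv.Perm.mul_apply] at hi ⊢
    by_contra h
    push_neg at h
    rw [h.2, h.1] at hi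
    exact hi rfl
  inv_mem' := by
    intro s hs
    refine Set.Finite.subset hs fun i hi => ?_
    simp only [Set.mem_setOf_eq] at hi ⊢
    intro h
    exact hi (Equiv.Perm.inv_eq_iff_eq.mpr h.symm)

theorem mem_SInf (s : Equiv.Perm ℕ) : s ∈ SInf ↔ {i | s i ≠ i}.Finite := Iff.rfl

/-- The group `Γ^∞_e` of finitely supported sequences in `Γ`. -/
def GammaE (Γ : Type*) [Group Γ] : Subgroup (ℕ → Γ) where
  carrier := {γ | {i | γ i ≠ 1}.Finite}
  one_mem' := by simp
  mul_mem' := by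
    intro f g hf hg
    refine Set.Finite.subset (hf.union hg) fun i hi => ?_
    simp only [Set.mem_setOf_eq, Set.mem_union, Pi.mul_apply] at hi ⊢
    by_contra h
    push_neg at h
    rw [h.1, h.2] at hi
    exact hi (one_mul 1)
  inv_mem' := by
    intro f hf
    refine Set.Finite.subset hf fun i hi => ?_
    simp only [Set.mem_setOf_eq, Pi.inv_apply, ne_eq, inv_eq_one] at hi ⊢
    exact hi

theorem mem_GammaE {Γ : Type*} [Group Γ] (γ : ℕ → Γ) :
    γ ∈ GammaE Γ ↔ {i | γ i ≠ 1}.Finite := Iff.rfl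

/-- The permutation action of `Equiv.Perm ℕ` on `ℕ → Γ`. -/
def permMulAut (Γ : Type*) [Group Γ] (s : Equiv.Perm ℕ) : MulAut (ℕ → Γ) where
  toFun γ := γ ∘ s.symm
  invFun γ := γ ∘ s
  left_inv γ := by funext i; simp [Function.comp]
  right_inv γ := by funext i; simp [Function.comp]
  map_mul' γ δ := rfl

def permAction (Γ : Type*) [Group Γ] : Equiv.Perm ℕ →* MulAut (ℕ → Γ) where
  toFun := permMulAut Γ
  map_one' := by ext γ i; rfl
  map_mul' s t := by ext γ i; rfl

/-- The (big) wreath product `(ℕ → Γ) ⋊ Perm ℕ`. -/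
abbrev W (Γ : Type*) [Group Γ] := (ℕ → Γ) ⋊[permAction Γ] Equiv.Perm ℕ

/-- The wreath product `G = Γ ≀ 𝔖∞`, as the subgroup of `W Γ` of finitely
supported elements. -/
def WG (Γ : Type*) [Group Γ] : Subgroup (W Γ) where
  carrier := {g | {i | g.right i ≠ i}.Finite ∧ {i | g.left i ≠ 1}.Finite}
  one_mem' := by
    constructor
    · convert Set.finite_empty using 1
      ext i; simp
    · convert Set.finite_empty using 1
      ext i; simp
  mul_mem' := by
    rintro a b ⟨ha1, ha2⟩ ⟨hb1, hb2⟩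
    constructor
    · refine Set.Finite.subset (ha1.union hb1) fun i hi => ?_
      simp only [Set.mem_setOf_eq, Set.mem_union, SemidirectProduct.mul_right,
        Equiv.Perm.mul_apply] at hi ⊢
      by_contra h
      push_neg at h
      rw [h.2, h.1] at hi
      exact hi rfl
    · refine Set.Finite.subset (ha2.union (hb2.image a.right)) fun i hi => ?_
      simp only [Set.mem_setOf_eq, SemidirectProduct.mul_left, Pi.mul_apply] at hi
      by_contra h
      simp only [Set.mem_union, Set.mem_setOf_eq, Set.mem_image, not_or, not_exists,
        not_and, not_not] at h
      obtain ⟨h1, h2⟩ := h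
      apply hi
      have hb : b.left (a.right⁻¹ i) = 1 := by
        by_contra hc
        exact h2 (a.right⁻¹ i) hc (by simp)
      have hrfl : (permAction Γ a.right b.left) i = b.left (a.right⁻¹ i) := rfl
      rw [h1, one_mul, hrfl, hb]
  inv_mem' := by
    rintro a ⟨ha1, ha2⟩
    constructor
    · refine Set.Finite.subset ha1 fun i hi => ?_
      simp only [Set.mem_setOf_eq, SemidirectProduct.inv_right] at hi ⊢
      intro h
      exact hi (Equiv.Perm.inv_eq_iff_eq.mpr h.symm)
    · refine Set.Finite.subset (Set.Finite.preimage (a.right.injective.injOn) ha2)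
        fun i hi => ?_
      simp only [Set.mem_setOf_eq] at hi
      simp only [Set.mem_preimage, Set.mem_setOf_eq]
      intro h
      apply hi
      have hrfl : (a⁻¹).left i = (a.left (a.right i))⁻¹ := rfl
      rw [hrfl, h, inv_one]

theorem mem_WG {Γ : Type*} [Group Γ] (g : W Γ) :
    g ∈ WG Γ ↔ {i | g.right i ≠ i}.Finite ∧ {i | g.left i ≠ 1}.Finite := Iff.rfl

/-- The canonical copy of `𝔖∞` inside `Γ ≀ 𝔖∞`. -/
def permW {Γ : Type*} [Group Γ] (s : SInf) : WG Γ :=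
  ⟨SemidirectProduct.inr s.1, by
    rw [mem_WG]
    constructor
    · have h : (SemidirectProduct.inr s.1 : W Γ).right = s.1 := SemidirectProduct.right_inr _
      rw [h]
      exact s.2
    · convert Set.finite_empty using 1
      ext i; simp⟩

/-- The canonical copy of `Γ^∞_e` inside `Γ ≀ 𝔖∞`. -/
def seqW {Γ : Type*} [Group Γ] (γ : GammaE Γ) : WG Γ :=
  ⟨SemidirectProduct.inl γ.1, by
    rw [mem_WG]
    constructor
    · convert Set.finite_empty using 1
      ext i; simp
    · have h : (SemidirectProduct.inl γ.1 : W Γ).left = γ.1 := SemidirectProduct.left_inl _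
      rw [h]
      exact γ.2⟩

/-- The support of an element of `Γ ≀ 𝔖∞`. -/
def supp {Γ : Type*} [Group Γ] (g : WG Γ) : Set ℕ :=
  {i | (g : W Γ).right i ≠ i ∨ (g : W Γ).left i ≠ 1}

/-- Positive definiteness of a function on a group. -/
def IsPosDef {G : Type*} [Group G] (φ : G → ℂ) : Prop :=
  ∀ (m : ℕ) (g : Fin m → G) (c : Fin m → ℂ),
    0 ≤ ∑ i, ∑ j, c i * (starRingEnd ℂ) (c j) * φ ((g j)⁻¹ * g i)

/-- A state on a group: normalized positive definite function. -/
def IsState {G : Type*} [Group G] (φ : G → ℂ) : Prop := φ 1 = 1 ∧ IsPosDef φ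

/-- `𝔖∞`-centrality of a function on `Γ ≀ 𝔖∞`. -/
def IsSCentral {Γ : Type*} [Group Γ] (φ : WG Γ → ℂ) : Prop :=
  ∀ (s : SInf) (g : WG Γ), φ (permW s * g * (permW s)⁻¹) = φ g

/-- The commutant of a set of bounded operators. -/
def commutant {H : Type*} [NormedAddCommGroup H] [InnerProductSpace ℂ H]
    (S : Set (H →L[ℂ] H)) : Set (H →L[ℂ] H) := {T | ∀ A ∈ S, T * A = A * T}

variable {Γ : Type*} [Group Γ]
variable {H : Type*} [NormedAddCommGroup H] [InnerProductSpace ℂ H] [CompleteSpace H]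

/-- The image set `π(G)` of a representation. -/
def repSet (π : WG Γ →* (H →L[ℂ] H)) : Set (H →L[ℂ] H) := Set.range fun g : WG Γ => π g

/-- The von Neumann algebra `π(G)''` (double commutant). -/
def vN (π : WG Γ →* (H →L[ℂ] H)) : Set (H →L[ℂ] H) := commutant (commutant (repSet π))

/-- The representation is factorial: the center `π(G)' ∩ π(G)''` consists of scalars. -/
def IsFactorial (π : WG Γ →* (H →L[ℂ] H)) : Prop :=
  ∀ T ∈ commutant (repSet π) ∩ vN π, ∃ c : ℂ, T = c • (1 : H →L[ℂ] H)

/-- `(π, H, ξ)` is a GNS triple for `φ`. -/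
structure IsGNS (φ : WG Γ → ℂ) (π : WG Γ →* (H →L[ℂ] H)) (ξ : H) : Prop where
  unitary : ∀ g, π g ∈ unitary (H →L[ℂ] H)
  norm_one : ‖ξ‖ = 1
  cyclic : Dense ((Submodule.span ℂ (Set.range fun g : WG Γ => π g ξ) : Submodule ℂ H) : Set H)
  inner_eq : ∀ g, φ g = ⟪ξ, π g ξ⟫

theorem swap_mem_SInf (a b : ℕ) : Equiv.swap a b ∈ SInf := by
  rw [mem_SInf]
  refine Set.Finite.subset ((Set.finite_singleton a).insert b) fun i hi => ?_
  simp only [Set.mem_setOf_eq] at hi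
  simp only [Set.mem_insert_iff, Set.mem_singleton_iff]
  by_contra h
  push_neg at h
  exact hi (Equiv.swap_apply_of_ne_of_ne h.2 h.1)

/-- The transposition `(a b)` as an element of `Γ ≀ 𝔖∞`. -/
def swapW {Γ : Type*} [Group Γ] (a b : ℕ) : WG Γ := permW ⟨Equiv.swap a b, swap_mem_SInf a b⟩

def omegaFun (n i : ℕ) : ℕ := if i < n then i + n else if i < 2 * n then i - n else i

theorem omegaFun_invol (n i : ℕ) : omegaFun n (omegaFun n i) = i := by
  unfold omegaFun
  split_ifs <;> first | contradiction | omega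

/-- Olshanski's permutation `ω_n`. -/
def omegaPerm (n : ℕ) : Equiv.Perm ℕ :=
  ⟨omegaFun n, omegaFun n, omegaFun_invol n, omegaFun_invol n⟩

theorem omegaPerm_mem (n : ℕ) : omegaPerm n ∈ SInf := by
  rw [mem_SInf]
  refine Set.Finite.subset (Set.finite_Iio (2 * n)) fun i hi => ?_
  simp only [Set.mem_setOf_eq] at hi
  simp only [Set.mem_Iio]
  by_contra h
  push_neg at h
  apply hi
  show omegaFun n i = i
  unfold omegaFun
  split_ifs <;> first | contradiction | omega

/-- `ω_n` as an element of `Γ ≀ 𝔖∞`. -/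
def omegaW {Γ : Type*} [Group Γ] (n : ℕ) : WG Γ := permW ⟨omegaPerm n, omegaPerm_mem n⟩

def sigmaFun (n i : ℕ) : ℕ := if i + 1 < n then i + 1 else if i + 1 = n then 0 else i

def sigmaInvFun (n i : ℕ) : ℕ := if i < n then (if i = 0 then n - 1 else i - 1) else i

theorem sigma_left_inv (n i : ℕ) : sigmaInvFun n (sigmaFun n i) = i := by
  unfold sigmaFun sigmaInvFun
  split_ifs <;> first | contradiction | omega

theorem sigma_right_inv (n i : ℕ) : sigmaFun n (sigmaInvFun n i) = i := by
  unfold sigmaFun sigmaInvFun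
  split_ifs <;> first | contradiction | omega

/-- The cycle `σ_n = (0 1 2 ... n-1)`. -/
def sigmaPerm (n : ℕ) : Equiv.Perm ℕ :=
  ⟨sigmaFun n, sigmaInvFun n, sigma_left_inv n, sigma_right_inv n⟩

theorem sigmaPerm_mem (n : ℕ) : sigmaPerm n ∈ SInf := by
  rw [mem_SInf]
  refine Set.Finite.subset (Set.finite_Iio n) fun i hi => ?_
  simp only [Set.mem_setOf_eq] at hi
  simp only [Set.mem_Iio]
  by_contra h
  push_neg at h
  apply hi
  show sigmaFun n i = i
  unfold sigmaFun
  split_ifs <;> first | contradiction | omega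

/-- The cycle of `s` through the point `i` (the paper's `s_p` for the orbit `p` of `i`). -/
def cycleAt (s : Equiv.Perm ℕ) (i : ℕ) : Equiv.Perm ℕ where
  toFun j := if s.SameCycle i j then s j else j
  invFun j := if s.SameCycle i j then s⁻¹ j else j
  left_inv j := by
    by_cases h : s.SameCycle i j
    · have h2 : s.SameCycle i (s j) := Equiv.Perm.sameCycle_apply_right.mpr h
      simp [h, h2]
    · simp [h]
  right_inv j := by
    by_cases h : s.SameCycle i j
    · have h2 : s.SameCycle i (s⁻¹ j) := Equiv.Perm.sameCycle_symm_apply_right.mpr h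
      simp [h, h2]
    · simp [h]

theorem cycleAt_mem {s : Equiv.Perm ℕ} (hs : s ∈ SInf) (i : ℕ) : cycleAt s i ∈ SInf := by
  rw [mem_SInf] at hs ⊢
  refine Set.Finite.subset hs fun j hj => ?_
  simp only [Set.mem_setOf_eq] at hj ⊢
  intro h
  apply hj
  show (if s.SameCycle i j then s j else j) = j
  split_ifs with hc
  · exact h
  · rfl

/-- The generalized cycle of `g = sγ` corresponding to the orbit of `i` under `s`. -/
def genCycle {Γ : Type*} [Group Γ] (g : WG Γ) (i : ℕ) : WG Γ :=
  permW ⟨cycleAt (g : W Γ).right i, cycleAt_mem g.2.1 i⟩ *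
  seqW ⟨fun k => if ((g : W Γ).right).SameCycle i k then (g : W Γ).left ((g : W Γ).right k)
      else 1, by
    rw [mem_GammaE]
    refine Set.Finite.subset (Set.Finite.preimage ((g : W Γ).right.injective.injOn) g.2.2)
      fun k hk => ?_
    simp only [Set.mem_setOf_eq] at hk
    simp only [Set.mem_preimage, Set.mem_setOf_eq]
    by_cases hsc : ((g : W Γ).right).SameCycle i k
    · rw [if_pos hsc] at hk; exact hk
    · rw [if_neg hsc] at hk; exact absurd rfl hk⟩

/-- The von Neumann algebra `𝔄_j` generated by `O_j` and the `π(γ)` with `γ` supported at `j`. -/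
def Aj (π : WG Γ →* (H →L[ℂ] H)) (O : H →L[ℂ] H) (j : ℕ) : Set (H →L[ℂ] H) :=
  commutant (commutant
    ({O} ∪ {T | ∃ γ : GammaE Γ, (∀ i, i ≠ j → (γ : ℕ → Γ) i = 1) ∧ T = π (seqW γ)}))

set_option linter.unusedSectionVars false
set_option linter.unusedVariables false
section Commutant

variable {H : Type*} [NormedAddCommGroup H] [InnerProductSpace ℂ H] [CompleteSpace H]

theorem mem_commutant {S : Set (H →L[ℂ] H)} {T : H →L[ℂ] H} :
    T ∈ commutant S ↔ ∀ A ∈ S, T * A = A * T := Iff.rfl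

theorem commutant_anti {S T : Set (H →L[ℂ] H)} (h : S ⊆ T) : commutant T ⊆ commutant S :=
  fun _ hx A hA => hx A (h hA)

theorem subset_bicommutant (S : Set (H →L[ℂ] H)) : S ⊆ commutant (commutant S) :=
  fun A hA T hT => (hT A hA).symm

theorem one_mem_commutant (S : Set (H →L[ℂ] H)) : (1 : H →L[ℂ] H) ∈ commutant S :=
  fun A _ => by rw [one_mul, mul_one]

theorem mul_mem_commutant {S : Set (H →L[ℂ] H)} {T U : H →L[ℂ] H}
    (hT : T ∈ commutant S) (hU : U ∈ commutant S) : T * U ∈ commutant S := fun A hA => by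
  rw [mul_assoc, hU A hA, ← mul_assoc, hT A hA, mul_assoc]

theorem commutant_span (S : Set (H →L[ℂ] H)) :
    commutant ((Submodule.span ℂ S : Submodule ℂ (H →L[ℂ] H)) : Set (H →L[ℂ] H))
      = commutant S := by
  apply Set.Subset.antisymm
  · exact commutant_anti Submodule.subset_span
  · intro T hT A hA
    induction hA using Submodule.span_induction with
    | mem B hB => exact hT B hB
    | zero => simp
    | add B C _ _ hB hC => rw [mul_add, add_mul, hB, hC]
    | smul c B _ hB => rw [mul_smul_comm, smul_mul_assoc, hB]

/-- One-vector von Neumann density at a vector. -/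
theorem bicommutant_approx_one (S : Set (H →L[ℂ] H)) (h1 : (1 : H →L[ℂ] H) ∈ S)
    (hmul : ∀ A ∈ S, ∀ B ∈ S, A * B ∈ S)
    (hstar : ∀ A ∈ S, ContinuousLinearMap.adjoint A ∈ S)
    {E : H →L[ℂ] H} (hE : E ∈ commutant (commutant S)) (x : H) :
    E x ∈ closure ((Submodule.span ℂ ((fun B : H →L[ℂ] H => B x) '' S) :
      Submodule ℂ H) : Set H) := by
  set K0 : Submodule ℂ H := Submodule.span ℂ ((fun B : H →L[ℂ] H => B x) '' S) with hK0
  set K : Submodule ℂ H := K0.topologicalClosure with hK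
  have hKclosed : IsClosed (K : Set H) := K0.isClosed_topologicalClosure
  haveI : CompleteSpace K := hKclosed.completeSpace_coe
  -- invariance of K under S
  have hinv : ∀ A ∈ S, ∀ v ∈ K, A v ∈ K := by
    intro A hA v hv
    have hmap : ∀ w ∈ K0, A w ∈ K0 := by
      intro w hw
      induction hw using Submodule.span_induction with
      | mem u hu =>
        obtain ⟨B, hB, rfl⟩ := hu
        have : A (B x) = (A * B) x := rfl
        rw [this]
        exact Submodule.subset_span ⟨A * B, hmul A hA B hB, rfl⟩
      | zero => simp
      | add u v _ _ hu hv => rw [map_add]; exact K0.add_mem hu hv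
      | smul c u _ hu => rw [map_smul]; exact K0.smul_mem c hu
    have hv' : v ∈ closure (K0 : Set H) := by rwa [← K0.topologicalClosure_coe]
    have : A v ∈ closure (A '' (K0 : Set H)) :=
      image_closure_subset_closure_image A.continuous (Set.mem_image_of_mem A hv')
    refine hKclosed.closure_subset_iff.mpr ?_ this
    rintro w ⟨u, hu, rfl⟩
    exact K0.le_topologicalClosure (hmap u hu)
  -- the projection onto K commutes with S
  set P : H →L[ℂ] H := K.subtypeL.comp (K.orthogonalProjectionOnto) with hP
  have hPmem : ∀ v ∈ K, P v = v := by
    intro v hv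
    show (K.orthogonalProjectionOnto v : H) = v
    exact Submodule.starProjection_eq_self_iff.mpr hv
  have hPperp : ∀ v ∈ Kᗮ, P v = 0 := by
    intro v hv
    have : K.orthogonalProjectionOnto v = 0 :=
      Submodule.orthogonalProjectionOnto_apply_of_mem_orthogonal hv
    simp [hP, this]
  have hPcomm : P ∈ commutant S := by
    intro A hA
    ext u
    have hdecomp : u = (P u : H) + (u - K.orthogonalProjectionOnto u) := by simp [hP]
    have hperp : (u - (K.orthogonalProjectionOnto u : H)) ∈ Kᗮ :=
      K.sub_starProjection_mem_orthogonal u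
    have hPu : (P u : H) ∈ K := by
      simp only [hP, ContinuousLinearMap.comp_apply, Submodule.coe_subtypeL', Submodule.coe_subtype]
      exact (K.orthogonalProjectionOnto u).2
    have hAperp : A (u - (K.orthogonalProjectionOnto u : H)) ∈ Kᗮ := by
      rw [Submodule.mem_orthogonal]
      intro w hw
      have hadj : (ContinuousLinearMap.adjoint A) w ∈ K := hinv _ (hstar A hA) w hw
      rw [← ContinuousLinearMap.adjoint_inner_left]
      exact (Submodule.mem_orthogonal K _).mp hperp _ hadj
    calc (P * A) u = P (A ((P u : H) + (u - K.orthogonalProjectionOnto u))) := by rw [← hdecomp]; rfl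
    _ = P (A (P u)) + P (A (u - K.orthogonalProjectionOnto u)) := by rw [map_add, map_add]
    _ = A (P u) + 0 := by rw [hPmem _ (hinv A hA _ hPu), hPperp _ hAperp]
    _ = (A * P) u := by rw [add_zero]; rfl
  -- conclude
  have hx : x ∈ K := K0.le_topologicalClosure
    (Submodule.subset_span ⟨1, h1, by simp⟩)
  have hEx : E x ∈ K := by
    have h1 : E x = E (P x) := by rw [hPmem x hx]
    have h2 : E (P x) = P (E x) := by
      have := hE P hPcomm
      calc E (P x) = (E * P) x := rfl
      _ = (P * E) x := by rw [this]
      _ = P (E x) := rfl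
    rw [h1, h2]
    simp only [hP, ContinuousLinearMap.comp_apply, Submodule.coe_subtypeL', Submodule.coe_subtype]
    exact (K.orthogonalProjectionOnto (E x)).2
  exact K0.topologicalClosure_coe ▸ hEx

end Commutant
section Amplify

variable {H : Type*} [NormedAddCommGroup H] [InnerProductSpace ℂ H] [CompleteSpace H]

/-- The amplification `B ↦ B ⊕ B` on `H ⊕_2 H`. -/
def ampl (B : H →L[ℂ] H) : WithLp 2 (H × H) →L[ℂ] WithLp 2 (H × H) :=
  ((WithLp.prodContinuousLinearEquiv 2 ℂ H H).symm : (H × H) →L[ℂ] WithLp 2 (H × H)).comp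
    ((B.prodMap B).comp
      ((WithLp.prodContinuousLinearEquiv 2 ℂ H H) : WithLp 2 (H × H) →L[ℂ] (H × H)))

theorem ampl_apply_fst (B : H →L[ℂ] H) (u : WithLp 2 (H × H)) :
    (ampl B u).fst = B u.fst := rfl

theorem ampl_apply_snd (B : H →L[ℂ] H) (u : WithLp 2 (H × H)) :
    (ampl B u).snd = B u.snd := rfl

theorem withlp_ext {u v : WithLp 2 (H × H)} (h1 : u.fst = v.fst) (h2 : u.snd = v.snd) : u = v := by
  have : (WithLp.prodContinuousLinearEquiv 2 ℂ H H) u =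
      (WithLp.prodContinuousLinearEquiv 2 ℂ H H) v := Prod.ext h1 h2
  exact (WithLp.prodContinuousLinearEquiv 2 ℂ H H).injective this

theorem ampl_one : ampl (1 : H →L[ℂ] H) = 1 := by
  apply ContinuousLinearMap.ext
  intro u
  exact withlp_ext rfl rfl

theorem ampl_mul (A B : H →L[ℂ] H) : ampl (A * B) = ampl A * ampl B := by
  apply ContinuousLinearMap.ext
  intro u
  exact withlp_ext rfl rfl

theorem ampl_adjoint (A : H →L[ℂ] H) :
    ampl (ContinuousLinearMap.adjoint A) = ContinuousLinearMap.adjoint (ampl A) := by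
  rw [ContinuousLinearMap.eq_adjoint_iff]
  intro x y
  simp only [WithLp.prod_inner_apply, WithLp.ofLp_fst, WithLp.ofLp_snd]
  rw [ampl_apply_fst, ampl_apply_snd,
    ampl_apply_fst, ampl_apply_snd, ContinuousLinearMap.adjoint_inner_left,
    ContinuousLinearMap.adjoint_inner_left]

end Amplify
section Amplify2

variable {H : Type*} [NormedAddCommGroup H] [InnerProductSpace ℂ H] [CompleteSpace H]

private def eS : (H × H) →L[ℂ] WithLp 2 (H × H) :=
  ((WithLp.prodContinuousLinearEquiv 2 ℂ H H).symm : (H × H) →L[ℂ] WithLp 2 (H × H))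

private theorem eS_inj : Function.Injective (eS : (H × H) →L[ℂ] WithLp 2 (H × H)) :=
  (WithLp.prodContinuousLinearEquiv 2 ℂ H H).symm.injective

private theorem eS_fst (p : H × H) : ((eS p : WithLp 2 (H × H))).fst = p.fst := rfl
private theorem eS_snd (p : H × H) : ((eS p : WithLp 2 (H × H))).snd = p.snd := rfl

/-- Matrix blocks of an operator on `H ⊕_2 H`. -/
private def blk (a b : Bool) (T : WithLp 2 (H × H) →L[ℂ] WithLp 2 (H × H)) : H →L[ℂ] H :=
  (if a then ContinuousLinearMap.snd ℂ H H else ContinuousLinearMap.fst ℂ H H).comp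
    ((((WithLp.prodContinuousLinearEquiv 2 ℂ H H) :
        WithLp 2 (H × H) →L[ℂ] H × H).comp (T.comp eS)).comp
      (if b then ContinuousLinearMap.inr ℂ H H else ContinuousLinearMap.inl ℂ H H))

private theorem blk_col1 (T : WithLp 2 (H × H) →L[ℂ] WithLp 2 (H × H)) (v : H) :
    T (eS (v, 0)) = eS (blk false false T v, blk true false T v) := by
  apply withlp_ext
  · rfl
  · rfl

private theorem blk_col2 (T : WithLp 2 (H × H) →L[ℂ] WithLp 2 (H × H)) (v : H) :
    T (eS (0, v)) = eS (blk false true T v, blk true true T v) := by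
  apply withlp_ext
  · rfl
  · rfl

private theorem blocks_apply (T : WithLp 2 (H × H) →L[ℂ] WithLp 2 (H × H))
    (u : WithLp 2 (H × H)) :
    T u = eS (blk false false T u.fst + blk false true T u.snd,
              blk true false T u.fst + blk true true T u.snd) := by
  have hu : u = eS (u.fst, 0) + eS (0, u.snd) := by
    apply withlp_ext
    · show u.fst = ((eS (u.fst, 0) : WithLp 2 (H × H)).fst + (eS (0, u.snd) : WithLp 2 (H × H)).fst)
      rw [eS_fst, eS_fst]; simp
    · show u.snd = ((eS (u.fst, 0) : WithLp 2 (H × H)).snd + (eS (0, u.snd) : WithLp 2 (H × H)).snd)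
      rw [eS_snd, eS_snd]; simp
  calc T u = T (eS (u.fst, 0)) + T (eS (0, u.snd)) := by rw [← map_add, ← hu]
  _ = eS ((blk false false T u.fst, blk true false T u.fst)
        + (blk false true T u.snd, blk true true T u.snd)) := by
      rw [blk_col1, blk_col2, map_add]
  _ = _ := by rw [Prod.mk_add_mk]

private theorem ampl_eS_pair (A : H →L[ℂ] H) (a b : H) :
    ampl A (eS (a, b)) = eS (A a, A b) := by
  apply withlp_ext
  · rfl
  · rfl

private theorem blk_commutant {S : Set (H →L[ℂ] H)}
    {T : WithLp 2 (H × H) →L[ℂ] WithLp 2 (H × H)} (hT : T ∈ commutant (ampl '' S))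
    (a b : Bool) : blk a b T ∈ commutant S := by
  intro A hA
  have h := hT (ampl A) ⟨A, hA, rfl⟩
  have h1 : ∀ v : H, eS ((blk false false T (A v) : H), (blk true false T (A v) : H))
      = eS (A (blk false false T v), A (blk true false T v)) := by
    intro v
    have hh := congrArg
      (fun (U : WithLp 2 (H × H) →L[ℂ] WithLp 2 (H × H)) => U (eS (v, 0))) h
    simp only [ContinuousLinearMap.mul_apply] at hh
    rw [ampl_eS_pair, map_zero, blk_col1, blk_col1, ampl_eS_pair] at hh
    exact hh
  have h2 : ∀ v : H, eS ((blk false true T (A v) : H), (blk true true T (A v) : H))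
      = eS (A (blk false true T v), A (blk true true T v)) := by
    intro v
    have hh := congrArg
      (fun (U : WithLp 2 (H × H) →L[ℂ] WithLp 2 (H × H)) => U (eS (0, v))) h
    simp only [ContinuousLinearMap.mul_apply] at hh
    rw [ampl_eS_pair, map_zero, blk_col2, blk_col2, ampl_eS_pair] at hh
    exact hh
  apply ContinuousLinearMap.ext
  intro v
  show blk a b T (A v) = A (blk a b T v)
  cases a <;> cases b
  · exact congrArg Prod.fst (eS_inj (h1 v))
  · exact congrArg Prod.fst (eS_inj (h2 v))
  · exact congrArg Prod.snd (eS_inj (h1 v))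
  · exact congrArg Prod.snd (eS_inj (h2 v))

private theorem ampl_bicommutant {S : Set (H →L[ℂ] H)} {E : H →L[ℂ] H}
    (hE : E ∈ commutant (commutant S)) :
    ampl E ∈ commutant (commutant (ampl '' S)) := by
  intro T hT
  have hblk : ∀ a b : Bool, ∀ w : H, E (blk a b T w) = blk a b T (E w) := by
    intro a b w
    have hh := hE (blk a b T) (blk_commutant hT a b)
    exact congrFun (congrArg (fun (U : H →L[ℂ] H) => (U : H → H)) hh) w
  apply ContinuousLinearMap.ext
  intro u
  show ampl E (T u) = T (ampl E u)
  rw [blocks_apply T u, ampl_eS_pair, blocks_apply T (ampl E u),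
    ampl_apply_fst, ampl_apply_snd]
  congr 1
  refine Prod.ext ?_ ?_ <;> simp only [map_add, hblk]

theorem norm_fst_le (w : WithLp 2 (H × H)) : ‖w.fst‖ ≤ ‖w‖ := by
  have h : ‖w.fst‖ ^ 2 + ‖w.snd‖ ^ 2 = ‖w‖ ^ 2 := by
    have h1 : (‖w‖ : ℝ) ^ 2 = RCLike.re (⟪w, w⟫ : ℂ) := (@norm_sq_eq_re_inner ℂ _ _ _ _ w)
    rw [h1, WithLp.prod_inner_apply, WithLp.ofLp_fst, WithLp.ofLp_snd, map_add, ← @norm_sq_eq_re_inner ℂ, ← @norm_sq_eq_re_inner ℂ]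
  nlinarith [norm_nonneg w, norm_nonneg w.fst, norm_nonneg w.snd]

theorem norm_snd_le (w : WithLp 2 (H × H)) : ‖w.snd‖ ≤ ‖w‖ := by
  have h : ‖w.fst‖ ^ 2 + ‖w.snd‖ ^ 2 = ‖w‖ ^ 2 := by
    have h1 : (‖w‖ : ℝ) ^ 2 = RCLike.re (⟪w, w⟫ : ℂ) := (@norm_sq_eq_re_inner ℂ _ _ _ _ w)
    rw [h1, WithLp.prod_inner_apply, WithLp.ofLp_fst, WithLp.ofLp_snd, map_add, ← @norm_sq_eq_re_inner ℂ, ← @norm_sq_eq_re_inner ℂ]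
  nlinarith [norm_nonneg w, norm_nonneg w.fst, norm_nonneg w.snd]

/-- Two-vector von Neumann density. -/
theorem bicommutant_approx_two (S : Set (H →L[ℂ] H)) (h1 : (1 : H →L[ℂ] H) ∈ S)
    (hmul : ∀ A ∈ S, ∀ B ∈ S, A * B ∈ S)
    (hstar : ∀ A ∈ S, ContinuousLinearMap.adjoint A ∈ S)
    {E : H →L[ℂ] H} (hE : E ∈ commutant (commutant S)) (x y : H) {ε : ℝ} (hε : 0 < ε) :
    ∃ B ∈ (Submodule.span ℂ S : Submodule ℂ (H →L[ℂ] H)),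
      ‖B x - E x‖ < ε ∧ ‖B y - E y‖ < ε := by
  set z : WithLp 2 (H × H) := eS (x, y) with hz
  have h1' : (1 : WithLp 2 (H × H) →L[ℂ] WithLp 2 (H × H)) ∈ ampl '' S :=
    ⟨1, h1, ampl_one⟩
  have hmul' : ∀ A ∈ ampl '' S, ∀ B ∈ ampl '' S, A * B ∈ ampl '' S := by
    rintro _ ⟨A, hA, rfl⟩ _ ⟨B, hB, rfl⟩
    exact ⟨A * B, hmul A hA B hB, ampl_mul A B⟩
  have hstar' : ∀ A ∈ ampl '' S, ContinuousLinearMap.adjoint A ∈ ampl '' S := by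
    rintro _ ⟨A, hA, rfl⟩
    rw [← ampl_adjoint]
    exact ⟨_, hstar A hA, rfl⟩
  have happrox := bicommutant_approx_one (ampl '' S) h1' hmul' hstar' (ampl_bicommutant hE) z
  rw [Metric.mem_closure_iff] at happrox
  obtain ⟨w, hw, hdist⟩ := happrox ε hε
  set L : (H →L[ℂ] H) →ₗ[ℂ] WithLp 2 (H × H) :=
    { toFun := fun B => ampl B z
      map_add' := by
        intro A B
        apply withlp_ext
        · rfl
        · rfl
      map_smul' := by
        intro c A
        apply withlp_ext
        · rfl
        · rfl } with hL
  have himg : (fun B : WithLp 2 (H × H) →L[ℂ] WithLp 2 (H × H) => B z) '' (ampl '' S)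
      = L '' S := by
    rw [Set.image_image]; rfl
  rw [himg, ← Submodule.map_span] at hw
  obtain ⟨B, hB, rfl⟩ := hw
  refine ⟨B, hB, ?_, ?_⟩
  · have hc : B x - E x = (L B - ampl E z).fst := rfl
    rw [hc]
    calc ‖(L B - ampl E z).fst‖ ≤ ‖L B - ampl E z‖ := norm_fst_le _
    _ = dist (ampl E z) (L B) := by rw [dist_eq_norm, ← norm_neg]; congr 1; abel
    _ < ε := hdist
  · have hc : B y - E y = (L B - ampl E z).snd := rfl
    rw [hc]
    calc ‖(L B - ampl E z).snd‖ ≤ ‖L B - ampl E z‖ := norm_snd_le _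
    _ = dist (ampl E z) (L B) := by rw [dist_eq_norm, ← norm_neg]; congr 1; abel
    _ < ε := hdist

end Amplify2
section GroupLemmas

variable {Γ : Type*} [Group Γ]

theorem coe_mul_WG (a b : WG Γ) : ((a * b : WG Γ) : W Γ) = (a : W Γ) * (b : W Γ) := rfl

theorem permW_mul (s t : SInf) : (permW (s * t) : WG Γ) = permW s * permW t := by
  apply Subtype.ext
  show SemidirectProduct.inr ((s * t : SInf) : Equiv.Perm ℕ) = _
  rw [coe_mul_WG]
  show SemidirectProduct.inr ((s : Equiv.Perm ℕ) * (t : Equiv.Perm ℕ))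
    = SemidirectProduct.inr (s : Equiv.Perm ℕ) * SemidirectProduct.inr (t : Equiv.Perm ℕ)
  exact map_mul _ _ _

theorem permW_one : (permW 1 : WG Γ) = 1 := by
  apply Subtype.ext
  show SemidirectProduct.inr ((1 : SInf) : Equiv.Perm ℕ) = 1
  exact map_one _

theorem permW_inv (s : SInf) : (permW s⁻¹ : WG Γ) = (permW s)⁻¹ := by
  rw [eq_inv_iff_mul_eq_one, ← permW_mul, inv_mul_cancel, permW_one]

theorem permW_mul_seqW (s : SInf) (γ δ : GammaE Γ)
    (h : ∀ i, (δ : ℕ → Γ) i = (γ : ℕ → Γ) ((s : Equiv.Perm ℕ).symm i)) :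
    (permW s : WG Γ) * seqW γ = seqW δ * permW s := by
  apply Subtype.ext
  rw [coe_mul_WG, coe_mul_WG]
  show SemidirectProduct.inr (s : Equiv.Perm ℕ) * SemidirectProduct.inl (γ : ℕ → Γ)
    = SemidirectProduct.inl (δ : ℕ → Γ) * SemidirectProduct.inr (s : Equiv.Perm ℕ)
  have hδ : (δ : ℕ → Γ) = (permAction Γ (s : Equiv.Perm ℕ)) (γ : ℕ → Γ) := funext h
  rw [hδ, SemidirectProduct.inl_aut, map_inv, inv_mul_cancel_right]

theorem swapW_eq_permW (a b : ℕ) :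
    (swapW a b : WG Γ) = permW ⟨Equiv.swap a b, swap_mem_SInf a b⟩ := rfl

theorem swapW_mul_self (a b : ℕ) : (swapW a b : WG Γ) * swapW a b = 1 := by
  rw [swapW_eq_permW, ← permW_mul]
  have : (⟨Equiv.swap a b, swap_mem_SInf a b⟩ * ⟨Equiv.swap a b, swap_mem_SInf a b⟩ : SInf)
      = 1 := by
    apply Subtype.ext
    show Equiv.swap a b * Equiv.swap a b = 1
    rw [Equiv.swap_mul_self]
  rw [this, permW_one]

theorem swapW_inv (a b : ℕ) : (swapW a b : WG Γ)⁻¹ = swapW a b :=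
  inv_eq_of_mul_eq_one_right (swapW_mul_self a b)

theorem swapW_symm (a b : ℕ) : (swapW a b : WG Γ) = swapW b a := by
  apply Subtype.ext
  show SemidirectProduct.inr (Equiv.swap a b) = SemidirectProduct.inr (Equiv.swap b a)
  rw [Equiv.swap_comm]

theorem permW_conj_swapW (s : SInf) (a b : ℕ) :
    (permW s : WG Γ) * swapW a b * (permW s)⁻¹
      = swapW ((s : Equiv.Perm ℕ) a) ((s : Equiv.Perm ℕ) b) := by
  rw [swapW_eq_permW, swapW_eq_permW, ← permW_inv, ← permW_mul, ← permW_mul]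
  congr 1
  apply Subtype.ext
  show (s : Equiv.Perm ℕ) * Equiv.swap a b * (s : Equiv.Perm ℕ)⁻¹
    = Equiv.swap ((s : Equiv.Perm ℕ) a) ((s : Equiv.Perm ℕ) b)
  rw [Equiv.swap_apply_apply]

theorem swapW_conj_swapW (a b c d : ℕ) :
    (swapW a b : WG Γ) * swapW c d * swapW a b
      = swapW (Equiv.swap a b c) (Equiv.swap a b d) := by
  have h := permW_conj_swapW (Γ := Γ) ⟨Equiv.swap a b, swap_mem_SInf a b⟩ c d
  rw [← swapW_eq_permW, swapW_inv] at h
  exact h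

theorem swapW_comm_disjoint {a b c d : ℕ} (hca : c ≠ a) (hcb : c ≠ b) (hda : d ≠ a)
    (hdb : d ≠ b) : (swapW a b : WG Γ) * swapW c d = swapW c d * swapW a b := by
  have h := swapW_conj_swapW (Γ := Γ) a b c d
  rw [Equiv.swap_apply_of_ne_of_ne hca hcb, Equiv.swap_apply_of_ne_of_ne hda hdb] at h
  calc (swapW a b : WG Γ) * swapW c d
      = (swapW a b * swapW c d * swapW a b) * swapW a b := by
        rw [mul_assoc, swapW_mul_self, mul_one]
  _ = swapW c d * swapW a b := by rw [h]

theorem swapW_mul_seqW (a b : ℕ) (γ : GammaE Γ) (ha : (γ : ℕ → Γ) a = 1)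
    (hb : (γ : ℕ → Γ) b = 1) :
    (swapW a b : WG Γ) * seqW γ = seqW γ * swapW a b := by
  rw [swapW_eq_permW]
  apply permW_mul_seqW
  intro i
  show (γ : ℕ → Γ) i = (γ : ℕ → Γ) ((Equiv.swap a b).symm i)
  rw [Equiv.symm_swap]
  rcases eq_or_ne i a with rfl | hia
  · rw [Equiv.swap_apply_left, ha, hb]
  rcases eq_or_ne i b with rfl | hib
  · rw [Equiv.swap_apply_right, ha, hb]
  · rw [Equiv.swap_apply_of_ne_of_ne hia hib]

theorem seqW_comm_swapW (i j : ℕ) (γ : GammaE Γ) (hi : (γ : ℕ → Γ) i = 1)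
    (hj : (γ : ℕ → Γ) j = 1) :
    (seqW γ : WG Γ) * swapW i j = swapW i j * seqW γ :=
  (swapW_mul_seqW i j γ hi hj).symm

end GroupLemmas
section RepLemmas

variable {Γ : Type*} [Group Γ] {H : Type*} [NormedAddCommGroup H]
  [InnerProductSpace ℂ H] [CompleteSpace H]

theorem commutant_triple (S : Set (H →L[ℂ] H)) :
    commutant (commutant (commutant S)) = commutant S :=
  Set.Subset.antisymm (commutant_anti (subset_bicommutant S))
    (subset_bicommutant (commutant S))

theorem prod_mem_commutant {S : Set (H →L[ℂ] H)} :
    ∀ (l : List (H →L[ℂ] H)), (∀ A ∈ l, A ∈ commutant S) → l.prod ∈ commutant S := by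
  intro l
  induction l with
  | nil => intro _; simpa using one_mem_commutant S
  | cons A t ih =>
    intro h
    rw [List.prod_cons]
    exact mul_mem_commutant (h A List.mem_cons_self) (ih fun B hB => h B (List.mem_cons_of_mem _ hB))

variable {π : WG Γ →* (H →L[ℂ] H)}

theorem adjoint_pi (hu : ∀ g : WG Γ, π g ∈ unitary (H →L[ℂ] H)) (g : WG Γ) :
    ContinuousLinearMap.adjoint (π g) = π g⁻¹ := by
  have h := (Unitary.mem_iff.mp (hu g)).1
  rw [ContinuousLinearMap.star_eq_adjoint] at h
  calc ContinuousLinearMap.adjoint (π g)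
      = ContinuousLinearMap.adjoint (π g) * (π g * π g⁻¹) := by
        rw [← map_mul, mul_inv_cancel, map_one, mul_one]
  _ = (ContinuousLinearMap.adjoint (π g) * π g) * π g⁻¹ := by rw [mul_assoc]
  _ = π g⁻¹ := by rw [h, one_mul]

theorem inner_pi_move (hu : ∀ g : WG Γ, π g ∈ unitary (H →L[ℂ] H)) (g : WG Γ) (x y : H) :
    ⟪y, π g x⟫ = ⟪π g⁻¹ y, x⟫ := by
  rw [← adjoint_pi hu g, ContinuousLinearMap.adjoint_inner_left]

theorem norm_pi (hu : ∀ g : WG Γ, π g ∈ unitary (H →L[ℂ] H)) (g : WG Γ) (x : H) :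
    ‖π g x‖ = ‖x‖ := by
  have h : (‖π g x‖ : ℝ) ^ 2 = ‖x‖ ^ 2 := by
    rw [@norm_sq_eq_re_inner ℂ _ _ _ _ ((π g) x), @norm_sq_eq_re_inner ℂ _ _ _ _ x]
    congr 1
    have hx : π g⁻¹ ((π g) x) = x := by
      rw [← ContinuousLinearMap.mul_apply, ← map_mul, inv_mul_cancel, map_one,
        ContinuousLinearMap.one_apply]
    rw [inner_pi_move hu g, hx]
  have h1 := norm_nonneg (π g x)
  have h2 := norm_nonneg x
  nlinarith

variable {O : ℕ → (H →L[ℂ] H)}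

/-- Conjugation of asymptotic transpositions by group elements. -/
theorem conjO (hu : ∀ g : WG Γ, π g ∈ unitary (H →L[ℂ] H))
    (hO : ∀ (i : ℕ) (x y : H),
      Tendsto (fun j => ⟪y, π (swapW i j) x⟫) atTop (𝓝 ⟪y, O i x⟫))
    {i i' : ℕ} {g : WG Γ}
    (h : ∀ᶠ j in atTop, g * swapW i j = swapW i' j * g) :
    π g * O i = O i' * π g := by
  ext x
  apply ext_inner_left ℂ
  intro y
  have h1 : Tendsto (fun j => ⟪y, π (g * swapW i j) x⟫) atTop (𝓝 ⟪y, π g (O i x)⟫) := by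
    have := hO i x (π g⁻¹ y)
    have he : ∀ j : ℕ, ⟪π g⁻¹ y, π (swapW i j) x⟫ = ⟪y, π (g * swapW i j) x⟫ := by
      intro j
      rw [map_mul, ContinuousLinearMap.mul_apply, inner_pi_move hu g]
    have hlim : ⟪π g⁻¹ y, O i x⟫ = ⟪y, π g (O i x)⟫ := (inner_pi_move hu g _ _).symm
    rw [← hlim]
    exact this.congr he
  have h2 : Tendsto (fun j => ⟪y, π (swapW i' j * g) x⟫) atTop (𝓝 ⟪y, O i' (π g x)⟫) := by
    have := hO i' (π g x) y
    exact this.congr fun j => by rw [map_mul, ContinuousLinearMap.mul_apply]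
  have heq : (fun j => ⟪y, π (g * swapW i j) x⟫) =ᶠ[atTop]
      (fun j => ⟪y, π (swapW i' j * g) x⟫) := h.mono fun j hj => by simp only [hj]
  have := tendsto_nhds_unique (h1.congr' heq) h2
  simpa using this

theorem eventually_gt_all (m : ℕ) (k : ℕ → ℕ) : ∀ᶠ j in atTop, ∀ l < m, k l < j := by
  rw [eventually_atTop]
  refine ⟨(Finset.range m).sup k + 1, fun j hj l hl => ?_⟩
  have : k l ≤ (Finset.range m).sup k := Finset.le_sup (Finset.mem_range.mpr hl)
  omega

/-- `O i` commutes with `π (swapW a b)` when the swap fixes `i`. -/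
theorem swap_comm_O (hu : ∀ g : WG Γ, π g ∈ unitary (H →L[ℂ] H))
    (hO : ∀ (i : ℕ) (x y : H),
      Tendsto (fun j => ⟪y, π (swapW i j) x⟫) atTop (𝓝 ⟪y, O i x⟫))
    {a b i : ℕ} (ha : a ≠ i) (hb : b ≠ i) :
    π (swapW a b) * O i = O i * π (swapW a b) := by
  refine conjO hu hO ?_
  filter_upwards [eventually_gt_all 2 (fun l => if l = 0 then a else b)] with j hj
  have hja : a < j := by have := hj 0 (by omega); simpa using this
  have hjb : b < j := by have := hj 1 (by omega); simpa using this
  exact swapW_comm_disjoint (c := i) (d := j) (Ne.symm ha) (Ne.symm hb)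
    (by omega) (by omega)

/-- Conjugating `O a` by the transposition `(a b)` gives `O b`. -/
theorem swap_conj_O (hu : ∀ g : WG Γ, π g ∈ unitary (H →L[ℂ] H))
    (hO : ∀ (i : ℕ) (x y : H),
      Tendsto (fun j => ⟪y, π (swapW i j) x⟫) atTop (𝓝 ⟪y, O i x⟫))
    (a b : ℕ) (hab : a ≠ b) :
    π (swapW a b) * O a = O b * π (swapW a b) := by
  refine conjO hu hO ?_
  filter_upwards [eventually_gt_all 2 (fun l => if l = 0 then a else b)] with j hj
  have hja : a < j := by have := hj 0 (by omega); simpa using this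
  have hjb : b < j := by have := hj 1 (by omega); simpa using this
  have h := swapW_conj_swapW (Γ := Γ) a b a j
  rw [Equiv.swap_apply_left, Equiv.swap_apply_of_ne_of_ne (by omega : j ≠ a)
    (by omega : j ≠ b)] at h
  calc swapW a b * swapW a j
      = (swapW a b * swapW a j * swapW a b) * swapW a b := by
        rw [mul_assoc, swapW_mul_self, mul_one]
  _ = swapW b j * swapW a b := by rw [h]

theorem pi_mem_repSet (g : WG Γ) : π g ∈ repSet π := ⟨g, rfl⟩

theorem O_mem_bicommutant
    (hO : ∀ (i : ℕ) (x y : H),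
      Tendsto (fun j => ⟪y, π (swapW i j) x⟫) atTop (𝓝 ⟪y, O i x⟫))
    (i : ℕ) : O i ∈ commutant (commutant (repSet π)) := by
  intro T hT
  ext x
  apply ext_inner_left ℂ
  intro y
  show ⟪y, O i (T x)⟫ = ⟪y, T (O i x)⟫
  have h1 := hO i (T x) y
  have h2 : Tendsto (fun j => ⟪y, π (swapW i j) (T x)⟫) atTop (𝓝 ⟪y, T (O i x)⟫) := by
    have h3 := hO i x (ContinuousLinearMap.adjoint T y)
    have he : ∀ j : ℕ, ⟪ContinuousLinearMap.adjoint T y, π (swapW i j) x⟫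
        = ⟪y, π (swapW i j) (T x)⟫ := by
      intro j
      rw [ContinuousLinearMap.adjoint_inner_left]
      have hc : T (π (swapW i j) x) = π (swapW i j) (T x) := by
        have := hT (π (swapW i j)) (pi_mem_repSet _)
        calc T (π (swapW i j) x) = (T * π (swapW i j)) x := rfl
        _ = (π (swapW i j) * T) x := by rw [this]
        _ = _ := rfl
      rw [hc]
    have hlim : ⟪ContinuousLinearMap.adjoint T y, O i x⟫ = ⟪y, T (O i x)⟫ :=
      ContinuousLinearMap.adjoint_inner_left T _ _
    rw [← hlim]
    exact h3.congr he
  exact tendsto_nhds_unique h1 h2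

end RepLemmas
section AjLemmas

variable {Γ : Type*} [Group Γ] {H : Type*} [NormedAddCommGroup H]
  [InnerProductSpace ℂ H] [CompleteSpace H]

theorem conj_comm_helper {M : Type*} [Monoid M] {τ V T : M} (hτ : τ * τ = 1)
    (h : V * (τ * T * τ) = (τ * T * τ) * V) : (τ * V * τ) * T = T * (τ * V * τ) := by
  have h2 := congrArg (fun x => τ * x) h
  simp only [← mul_assoc] at h2
  rw [hτ, one_mul] at h2
  have h3 := congrArg (fun x => x * τ) h2
  rw [mul_assoc (τ * V * τ * T) τ τ, hτ, mul_one] at h3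
  simp only [← mul_assoc] at h3 ⊢
  exact h3

/-- The generating set of the von Neumann algebra `𝔄_j`. -/
def genSet (π : WG Γ →* (H →L[ℂ] H)) (O0 : H →L[ℂ] H) (j : ℕ) : Set (H →L[ℂ] H) :=
  {O0} ∪ {T | ∃ γ : GammaE Γ, (∀ i, i ≠ j → (γ : ℕ → Γ) i = 1) ∧ T = π (seqW γ)}

theorem Aj_eq (π : WG Γ →* (H →L[ℂ] H)) (O0 : H →L[ℂ] H) (j : ℕ) :
    Aj π O0 j = commutant (commutant (genSet π O0 j)) := rfl

theorem Aj_comm {π : WG Γ →* (H →L[ℂ] H)} {O0 : H →L[ℂ] H} {j : ℕ}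
    {V T : H →L[ℂ] H} (hV : V ∈ Aj π O0 j) (hT : T ∈ commutant (genSet π O0 j)) :
    V * T = T * V := hV T hT

variable {π : WG Γ →* (H →L[ℂ] H)} {O : ℕ → (H →L[ℂ] H)}

theorem swap_mem_commutant_genSet (hu : ∀ g : WG Γ, π g ∈ unitary (H →L[ℂ] H))
    (hO : ∀ (i : ℕ) (x y : H),
      Tendsto (fun j => ⟪y, π (swapW i j) x⟫) atTop (𝓝 ⟪y, O i x⟫))
    {a b j : ℕ} (ha : a ≠ j) (hb : b ≠ j) :
    π (swapW a b) ∈ commutant (genSet π (O j) j) := by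
  rintro A (rfl | ⟨γ, hγ, rfl⟩)
  · exact swap_comm_O hu hO ha hb
  · rw [← map_mul, ← map_mul, swapW_mul_seqW a b γ (hγ a ha) (hγ b hb)]

theorem swap_comm_Aj (hu : ∀ g : WG Γ, π g ∈ unitary (H →L[ℂ] H))
    (hO : ∀ (i : ℕ) (x y : H),
      Tendsto (fun j => ⟪y, π (swapW i j) x⟫) atTop (𝓝 ⟪y, O i x⟫))
    {a b j : ℕ} (ha : a ≠ j) (hb : b ≠ j)
    {V : H →L[ℂ] H} (hV : V ∈ Aj π (O j) j) :
    π (swapW a b) * V = V * π (swapW a b) :=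
  (Aj_comm hV (swap_mem_commutant_genSet hu hO ha hb)).symm

theorem pi_swap_sq (a b : ℕ) : π (swapW a b) * π (swapW a b) = 1 := by
  rw [← map_mul, swapW_mul_self, map_one]

theorem Aj_conj (hu : ∀ g : WG Γ, π g ∈ unitary (H →L[ℂ] H))
    (hO : ∀ (i : ℕ) (x y : H),
      Tendsto (fun j => ⟪y, π (swapW i j) x⟫) atTop (𝓝 ⟪y, O i x⟫))
    {a b : ℕ} (hab : a ≠ b) {V : H →L[ℂ] H} (hV : V ∈ Aj π (O a) a) :
    π (swapW a b) * V * π (swapW a b) ∈ Aj π (O b) b := by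
  set τ : H →L[ℂ] H := π (swapW a b) with hτdef
  have hτ : τ * τ = 1 := pi_swap_sq a b
  intro T hT
  -- T ∈ commutant (genSet π (O b) b); show (τ*V*τ)*T = T*(τ*V*τ)
  have hmid : τ * T * τ ∈ commutant (genSet π (O a) a) := by
    intro A hA
    have hτAτ : τ * A * τ ∈ genSet π (O b) b := by
      rcases hA with rfl | ⟨γ, hγ, rfl⟩
      · left
        have h := swap_conj_O hu hO a b hab
        rw [show τ * (O a) * τ = (O b * τ) * τ by rw [← h, hτdef],
          mul_assoc, hτ, mul_one]
        rfl
      · right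
        have hfin : {i | (γ : ℕ → Γ) (Equiv.swap a b i) ≠ 1}.Finite := by
          have : {i | (γ : ℕ → Γ) (Equiv.swap a b i) ≠ 1}
              = (Equiv.swap a b) ⁻¹' {i | (γ : ℕ → Γ) i ≠ 1} := rfl
          rw [this]
          exact Set.Finite.preimage (Equiv.injective _).injOn γ.2
        refine ⟨⟨fun i => (γ : ℕ → Γ) (Equiv.swap a b i), hfin⟩, ?_, ?_⟩
        · intro i hib
          show (γ : ℕ → Γ) (Equiv.swap a b i) = 1
          rcases eq_or_ne i a with rfl | hia
          · rw [Equiv.swap_apply_left]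
            exact hγ b (Ne.symm hab)
          · rw [Equiv.swap_apply_of_ne_of_ne hia hib]
            exact hγ i hia
        · have hmulseq := permW_mul_seqW (Γ := Γ) ⟨Equiv.swap a b, swap_mem_SInf a b⟩ γ
            ⟨fun i => (γ : ℕ → Γ) (Equiv.swap a b i), hfin⟩ (fun i => by
              show (γ : ℕ → Γ) ((Equiv.swap a b).symm i) = (γ : ℕ → Γ) (Equiv.swap a b i)
              rw [Equiv.symm_swap])
          rw [← swapW_eq_permW] at hmulseq
          rw [hτdef, ← map_mul, ← map_mul, hmulseq, mul_assoc, swapW_mul_self, mul_one]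
    have h := hT _ hτAτ
    -- h : (τ*T*τ)... careful: hT gives T * (τ*A*τ) = (τ*A*τ) * T
    exact conj_comm_helper hτ h
  exact conj_comm_helper hτ (hV _ hmid)

theorem Aj_subset_bicommutant
    (hO : ∀ (i : ℕ) (x y : H),
      Tendsto (fun j => ⟪y, π (swapW i j) x⟫) atTop (𝓝 ⟪y, O i x⟫))
    (j : ℕ) : Aj π (O j) j ⊆ commutant (commutant (repSet π)) := by
  have hsub : genSet π (O j) j ⊆ commutant (commutant (repSet π)) := by
    rintro A (rfl | ⟨γ, hγ, rfl⟩)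
    · exact O_mem_bicommutant hO j
    · exact subset_bicommutant _ (pi_mem_repSet _)
  have h1 : commutant (commutant (commutant (repSet π))) ⊆ commutant (genSet π (O j) j) :=
    commutant_anti hsub
  rw [commutant_triple] at h1
  exact commutant_anti h1

end AjLemmas
section Central

variable {Γ : Type*} [Group Γ] {H : Type*} [NormedAddCommGroup H]
  [InnerProductSpace ℂ H] [CompleteSpace H]

theorem one_mem_repSet (π : WG Γ →* (H →L[ℂ] H)) : (1 : H →L[ℂ] H) ∈ repSet π :=
  ⟨1, map_one π⟩

/-- Extension of `𝔖∞`-centrality to the von Neumann algebra `π(G)''`. -/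
theorem central_ext {φ : WG Γ → ℂ} {π : WG Γ →* (H →L[ℂ] H)} {ξ : H}
    (hcentral : IsSCentral φ) (hGNS : IsGNS φ π ξ)
    {E : H →L[ℂ] H} (hE : E ∈ commutant (commutant (repSet π))) (s : SInf) :
    ⟪π (permW s) ξ, E (π (permW s) ξ)⟫ = ⟪ξ, E ξ⟫ := by
  have hu := hGNS.unitary
  set u : H →L[ℂ] H := π (permW s) with hudef
  -- base case: elements of the image of π
  have hbase : ∀ g : WG Γ, ⟪u ξ, π g (u ξ)⟫ = ⟪ξ, π g ξ⟫ := by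
    intro g
    have h1 : ⟪u ξ, π g (u ξ)⟫ = ⟪ξ, π ((permW s)⁻¹ * g * permW s) ξ⟫ := by
      rw [map_mul, map_mul]
      have h2 : π (permW s)⁻¹ = ContinuousLinearMap.adjoint u := by
        rw [hudef, adjoint_pi hu]
      rw [ContinuousLinearMap.mul_apply, ContinuousLinearMap.mul_apply, h2,
        ContinuousLinearMap.adjoint_inner_right]
    rw [h1, ← hGNS.inner_eq, ← hGNS.inner_eq]
    have h3 := hcentral s⁻¹ g
    rw [permW_inv, inv_inv] at h3
    exact h3
  -- extension to the linear span
  have hspan : ∀ B ∈ (Submodule.span ℂ (repSet π) : Submodule ℂ (H →L[ℂ] H)),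
      ⟪u ξ, B (u ξ)⟫ = ⟪ξ, B ξ⟫ := by
    intro B hB
    induction hB using Submodule.span_induction with
    | mem B hB => obtain ⟨g, rfl⟩ := hB; exact hbase g
    | zero => simp
    | add B C _ _ hB hC => simp only [ContinuousLinearMap.add_apply, inner_add_right, hB, hC]
    | smul c B _ hB => simp only [ContinuousLinearMap.smul_apply, inner_smul_right, hB]
  -- approximation
  have hnorm : ‖u ξ‖ = 1 := by rw [hudef, norm_pi hu, hGNS.norm_one]
  have key : ∀ ε : ℝ, 0 < ε → ‖⟪u ξ, E (u ξ)⟫ - ⟪ξ, E ξ⟫‖ ≤ 0 + ε := by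
    intro ε hε
    have hε2 : (0 : ℝ) < ε / 2 := by linarith
    obtain ⟨B, hB, h1, h2⟩ := bicommutant_approx_two (repSet π) (one_mem_repSet π)
      (fun A hA B hB => by obtain ⟨g, rfl⟩ := hA; obtain ⟨h, rfl⟩ := hB
                           exact ⟨g * h, map_mul π g h⟩)
      (fun A hA => by obtain ⟨g, rfl⟩ := hA; rw [adjoint_pi hu]; exact ⟨g⁻¹, rfl⟩)
      hE (u ξ) ξ hε2
    have hBeq := hspan B hB
    have split : ⟪u ξ, E (u ξ)⟫ - ⟪ξ, E ξ⟫
        = ⟪u ξ, E (u ξ) - B (u ξ)⟫ + ⟪ξ, B ξ - E ξ⟫ := by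
      rw [inner_sub_right, inner_sub_right, hBeq]
      ring
    rw [split]
    have b1 : ‖⟪u ξ, E (u ξ) - B (u ξ)⟫‖ ≤ ε / 2 := by
      calc ‖⟪u ξ, E (u ξ) - B (u ξ)⟫‖ ≤ ‖u ξ‖ * ‖E (u ξ) - B (u ξ)‖ :=
            norm_inner_le_norm _ _
      _ = ‖B (u ξ) - E (u ξ)‖ := by rw [hnorm, one_mul, norm_sub_rev]
      _ ≤ ε / 2 := le_of_lt h1
    have b2 : ‖⟪ξ, B ξ - E ξ⟫‖ ≤ ε / 2 := by
      calc ‖⟪ξ, B ξ - E ξ⟫‖ ≤ ‖ξ‖ * ‖B ξ - E ξ‖ := norm_inner_le_norm _ _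
      _ = ‖B ξ - E ξ‖ := by rw [hGNS.norm_one, one_mul]
      _ ≤ ε / 2 := le_of_lt h2
    calc ‖⟪u ξ, E (u ξ) - B (u ξ)⟫ + ⟪ξ, B ξ - E ξ⟫‖
        ≤ ‖⟪u ξ, E (u ξ) - B (u ξ)⟫‖ + ‖⟪ξ, B ξ - E ξ⟫‖ := norm_add_le _ _
    _ ≤ 0 + ε := by linarith
  have hle := le_of_forall_pos_le_add key
  have : ⟪u ξ, E (u ξ)⟫ - ⟪ξ, E ξ⟫ = 0 := norm_le_zero_iff.mp hle
  exact sub_eq_zero.mp this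

end Central
section KeyStep

variable {Γ : Type*} [Group Γ] {H : Type*} [NormedAddCommGroup H]
  [InnerProductSpace ℂ H] [CompleteSpace H]

/-- The key replacement step: a transposition sandwiched between suitable operators can be
replaced by the asymptotic transposition. -/
theorem key_step {φ : WG Γ → ℂ} {π : WG Γ →* (H →L[ℂ] H)} {ξ : H} {O : ℕ → (H →L[ℂ] H)}
    (hcentral : IsSCentral φ) (hGNS : IsGNS φ π ξ)
    (hO : ∀ (i : ℕ) (x y : H),
      Tendsto (fun j => ⟪y, π (swapW i j) x⟫) atTop (𝓝 ⟪y, O i x⟫))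
    {a b : ℕ} (hab : a ≠ b) {P Q Vq : H →L[ℂ] H}
    (hP : P ∈ commutant (commutant (repSet π)))
    (hQ : Q ∈ commutant (commutant (repSet π)))
    (hVq : Vq ∈ Aj π (O a) a)
    (hcomm : ∀ᶠ j in atTop, a ≠ j ∧ b ≠ j ∧
      π (swapW a j) * P = P * π (swapW a j) ∧ π (swapW a j) * Q = Q * π (swapW a j)) :
    ⟪ξ, (P * (π (swapW a b) * Vq * π (swapW a b) * O b) * Q) ξ⟫
      = ⟪ξ, (P * (π (swapW a b) * Vq) * Q) ξ⟫ := by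
  have hu := hGNS.unitary
  set τ : H →L[ℂ] H := π (swapW a b) with hτdef
  have hτ2 : τ * τ = 1 := pi_swap_sq a b
  set W : H →L[ℂ] H := τ * Vq * τ with hWdef
  have hWAj : W ∈ Aj π (O b) b := Aj_conj hu hO hab hVq
  -- formatting of inner products
  have hformat : ∀ X : H →L[ℂ] H, ⟪ξ, (P * W * X * Q) ξ⟫
      = ⟪ContinuousLinearMap.adjoint (P * W) ξ, X (Q ξ)⟫ := by
    intro X
    calc ⟪ξ, (P * W * X * Q) ξ⟫ = ⟪ξ, (P * W) (X (Q ξ))⟫ := rfl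
    _ = _ := (ContinuousLinearMap.adjoint_inner_left (P * W) (X (Q ξ)) ξ).symm
  -- Step A : weak limit
  have hlim : Tendsto (fun j => ⟪ξ, (P * W * π (swapW b j) * Q) ξ⟫) atTop
      (𝓝 ⟪ξ, (P * W * O b * Q) ξ⟫) := by
    have h := hO b (Q ξ) (ContinuousLinearMap.adjoint (P * W) ξ)
    have hgoal : ⟪ξ, (P * W * O b * Q) ξ⟫
        = ⟪ContinuousLinearMap.adjoint (P * W) ξ, (O b) (Q ξ)⟫ := hformat (O b)
    rw [hgoal]
    exact h.congr fun j => (hformat (π (swapW b j))).symm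
  -- E is in the von Neumann algebra
  have hτmem : τ ∈ commutant (commutant (repSet π)) :=
    subset_bicommutant _ (pi_mem_repSet _)
  have hVmem : Vq ∈ commutant (commutant (repSet π)) :=
    Aj_subset_bicommutant hO a hVq
  have hE : P * W * τ * Q ∈ commutant (commutant (repSet π)) :=
    mul_mem_commutant (mul_mem_commutant (mul_mem_commutant hP
      (mul_mem_commutant (mul_mem_commutant hτmem hVmem) hτmem)) hτmem) hQ
  -- Step B : eventual constancy
  have hev : (fun j => ⟪ξ, (P * W * π (swapW b j) * Q) ξ⟫) =ᶠ[atTop]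
      (fun _ => ⟪ξ, (P * W * τ * Q) ξ⟫) := by
    filter_upwards [hcomm] with j hj
    obtain ⟨haj, hbj, hPj, hQj⟩ := hj
    set σ : H →L[ℂ] H := π (swapW a j) with hσdef
    have hσW : σ * W = W * σ := swap_comm_Aj (a := a) (b := j) (j := b) hu hO hab (Ne.symm hbj) hWAj
    have hgrp : (swapW b j : WG Γ) = swapW a j * swapW a b * swapW a j := by
      have h := swapW_conj_swapW (Γ := Γ) a j a b
      rw [Equiv.swap_apply_left,
        Equiv.swap_apply_of_ne_of_ne (Ne.symm hab) hbj] at h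
      rw [swapW_symm]
      exact h.symm
    have hπgrp : π (swapW b j) = σ * τ * σ := by
      rw [hgrp, map_mul, map_mul]
    have e1 : P * W * π (swapW b j) * Q = σ * (P * W * τ * Q) * σ := by
      rw [hπgrp]
      calc P * W * (σ * τ * σ) * Q = P * (W * σ) * τ * (σ * Q) := by
            simp only [mul_assoc]
      _ = P * (σ * W) * τ * (σ * Q) := by rw [hσW]
      _ = (P * σ) * W * τ * (σ * Q) := by simp only [mul_assoc]
      _ = (σ * P) * W * τ * (Q * σ) := by rw [hPj, hQj]
      _ = σ * (P * W * τ * Q) * σ := by simp only [mul_assoc]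
    rw [e1]
    -- apply the extended centrality
    have hswap_inv : π ((swapW a j : WG Γ))⁻¹ = σ := by rw [swapW_inv]
    have h2 : ⟪ξ, (σ * (P * W * τ * Q) * σ) ξ⟫ = ⟪σ ξ, (P * W * τ * Q) (σ ξ)⟫ := by
      calc ⟪ξ, (σ * (P * W * τ * Q) * σ) ξ⟫ = ⟪ξ, σ ((P * W * τ * Q) (σ ξ))⟫ := rfl
      _ = ⟪π ((swapW a j : WG Γ))⁻¹ ξ, (P * W * τ * Q) (σ ξ)⟫ :=
          inner_pi_move hu (swapW a j) _ _
      _ = _ := by rw [hswap_inv]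
    rw [h2]
    have h3 := central_ext hcentral hGNS hE ⟨Equiv.swap a j, swap_mem_SInf a j⟩
    rw [← swapW_eq_permW] at h3
    exact h3
  -- combine
  have hconst : Tendsto (fun j => ⟪ξ, (P * W * π (swapW b j) * Q) ξ⟫) atTop
      (𝓝 ⟪ξ, (P * W * τ * Q) ξ⟫) :=
    Tendsto.congr' hev.symm tendsto_const_nhds
  have hmain := tendsto_nhds_unique hlim hconst
  have hWτ : W * τ = τ * Vq := by
    rw [hWdef, mul_assoc, hτ2, mul_one]
  calc ⟪ξ, (P * (τ * Vq * τ * O b) * Q) ξ⟫ = ⟪ξ, (P * W * O b * Q) ξ⟫ := by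
        simp only [hWdef, mul_assoc]
  _ = ⟪ξ, (P * W * τ * Q) ξ⟫ := hmain
  _ = ⟪ξ, (P * (τ * Vq) * Q) ξ⟫ := by
        rw [mul_assoc P W τ, hWτ, ← mul_assoc]

end KeyStep
section CycleDecomp

theorem cycle_decomp (m : ℕ) (hm : 2 ≤ m) (k : ℕ → ℕ)
    (hinj : ∀ a < m, ∀ b < m, k a = k b → a = b)
    (s : SInf)
    (hcyc : ∀ l, l + 1 < m → (s : Equiv.Perm ℕ) (k (l + 1)) = k l)
    (hcyc0 : (s : Equiv.Perm ℕ) (k 0) = k (m - 1))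
    (hfix : ∀ i : ℕ, (∀ l < m, k l ≠ i) → (s : Equiv.Perm ℕ) i = i) :
    (s : Equiv.Perm ℕ)
      = ((List.range (m-1)).map (fun l => Equiv.swap (k l) (k (m-1)))).prod := by
  set T : ℕ → Equiv.Perm ℕ := fun l => Equiv.swap (k l) (k (m-1)) with hT
  have hne : ∀ a < m, ∀ b < m, a ≠ b → k a ≠ k b := by
    intro a ha b hb hab h
    exact hab (hinj a ha b hb h)
  have inv : ∀ n, n ≤ m - 1 →
      (((List.range n).map T).prod (k (m-1)) = (if n = 0 then k (m-1) else k (n-1)))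
      ∧ (∀ l, l < n → ((List.range n).map T).prod (k l)
          = if l = 0 then k (m-1) else k (l-1))
      ∧ (∀ l, n ≤ l → l < m - 1 → ((List.range n).map T).prod (k l) = k l)
      ∧ (∀ i, (∀ l, l < m → k l ≠ i) → ((List.range n).map T).prod i = i) := by
    intro n
    induction n with
    | zero =>
      intro _
      refine ⟨by simp, fun l hl => absurd hl (by omega), fun l _ _ => by simp,
        fun i _ => by simp⟩
    | succ n ih =>
      intro hn1
      have hn : n ≤ m - 1 := by omega
      have hnm : n < m - 1 := by omega
      obtain ⟨ih1, ih2, ih3, ih4⟩ := ih hn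
      have hstep : ∀ x : ℕ, ((List.range (n+1)).map T).prod x
          = ((List.range n).map T).prod (T n x) := by
        intro x
        rw [List.prod_range_succ]
        rfl
      refine ⟨?_, ?_, ?_, ?_⟩
      · rw [hstep]
        have hTn : T n (k (m-1)) = k n := by
          rw [hT]
          exact Equiv.swap_apply_right _ _
        rw [hTn]
        have := ih3 n le_rfl hnm
        rw [this]
        simp only [Nat.succ_ne_zero, if_false, Nat.add_sub_cancel]
      · intro l hl
        by_cases hln : l = n
        · subst hln
          rw [hstep]
          have hTn : T l (k l) = k (m-1) := by
            rw [hT]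
            exact Equiv.swap_apply_left _ _
          rw [hTn, ih1]
        · have hln' : l < n := by omega
          rw [hstep]
          have hTn : T n (k l) = k l := by
            rw [hT]
            refine Equiv.swap_apply_of_ne_of_ne ?_ ?_
            · exact hne l (by omega) n (by omega) (by omega)
            · exact hne l (by omega) (m-1) (by omega) (by omega)
          rw [hTn]
          exact ih2 l hln'
      · intro l hnl hlm
        rw [hstep]
        have hTn : T n (k l) = k l := by
          rw [hT]
          refine Equiv.swap_apply_of_ne_of_ne ?_ ?_
          · exact hne l (by omega) n (by omega) (by omega)
          · exact hne l (by omega) (m-1) (by omega) (by omega)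
        rw [hTn]
        exact ih3 l (by omega) hlm
      · intro i hi
        rw [hstep]
        have hTn : T n i = i := by
          rw [hT]
          refine Equiv.swap_apply_of_ne_of_ne ?_ ?_
          · exact Ne.symm (hi n (by omega))
          · exact Ne.symm (hi (m-1) (by omega))
        rw [hTn]
        exact ih4 i hi
  obtain ⟨inv1, inv2, inv3, inv4⟩ := inv (m-1) le_rfl
  apply Equiv.ext
  intro i
  by_cases hex : ∃ l, l < m ∧ k l = i
  · obtain ⟨l, hl, rfl⟩ := hex
    rcases eq_or_lt_of_le (Nat.lt_succ_iff.mp (by omega : l < (m-1) + 1)) with rfl | hlm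
    · -- l = m - 1
      rw [inv1]
      have h1 : ¬ (m - 1 = 0) := by omega
      rw [if_neg h1]
      have := hcyc (m - 2) (by omega)
      have he : m - 2 + 1 = m - 1 := by omega
      rw [he] at this
      rw [this]
      show k (m-2) = k (m-1-1)
      congr 1
    · rw [inv2 l hlm]
      rcases eq_or_ne l 0 with rfl | hl0
      · rw [if_pos rfl, hcyc0]
      · rw [if_neg hl0]
        have := hcyc (l - 1) (by omega)
        have he : l - 1 + 1 = l := by omega
        rw [he] at this
        rw [this]
  · push_neg at hex
    rw [inv4 i hex, hfix i hex]

end CycleDecomp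
section ListHelpers

theorem mul_list_prod_comm {M : Type*} [Monoid M] (x : M) :
    ∀ (L : List M), (∀ y ∈ L, x * y = y * x) → x * L.prod = L.prod * x := by
  intro L
  induction L with
  | nil => intro _; simp
  | cons a t ih =>
    intro h
    rw [List.prod_cons, ← mul_assoc, h a List.mem_cons_self, mul_assoc,
      ih (fun y hy => h y (List.mem_cons_of_mem _ hy)), mul_assoc]

theorem prod_mul_prod_interleave {M : Type*} [Monoid M] (f g : ℕ → M) :
    ∀ (n : ℕ), (∀ a b, a < b → b < n → g a * f b = f b * g a) →
    ((List.range n).map f).prod * ((List.range n).map g).prod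
      = ((List.range n).map (fun l => f l * g l)).prod := by
  intro n
  induction n with
  | zero => intro _; simp
  | succ n ih =>
    intro hcomm
    rw [List.prod_range_succ, List.prod_range_succ, List.prod_range_succ]
    have h1 : f n * ((List.range n).map g).prod = ((List.range n).map g).prod * f n := by
      apply mul_list_prod_comm
      intro y hy
      obtain ⟨a, ha, rfl⟩ := List.mem_map.mp hy
      exact (hcomm a n (List.mem_range.mp ha) (Nat.lt_succ_self n)).symm
    calc ((List.range n).map f).prod * f n * (((List.range n).map g).prod * g n)
        = ((List.range n).map f).prod * (f n * ((List.range n).map g).prod) * g n := by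
          simp only [mul_assoc]
    _ = ((List.range n).map f).prod * (((List.range n).map g).prod * f n) * g n := by
          rw [h1]
    _ = (((List.range n).map f).prod * ((List.range n).map g).prod) * (f n * g n) := by
          simp only [mul_assoc]
    _ = _ := by rw [ih (fun a b hab hbn => hcomm a b hab (by omega))]

end ListHelpers

section PermDecomp

variable {Γ : Type*} [Group Γ]

theorem permW_decomp (m : ℕ) (hm : 2 ≤ m) (k : ℕ → ℕ)
    (hinj : ∀ a < m, ∀ b < m, k a = k b → a = b)
    (s : SInf)
    (hcyc : ∀ l, l + 1 < m → (s : Equiv.Perm ℕ) (k (l + 1)) = k l)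
    (hcyc0 : (s : Equiv.Perm ℕ) (k 0) = k (m - 1))
    (hfix : ∀ i : ℕ, (∀ l < m, k l ≠ i) → (s : Equiv.Perm ℕ) i = i) :
    (permW s : WG Γ)
      = ((List.range (m-1)).map (fun l => (swapW (k l) (k (m-1)) : WG Γ))).prod := by
  apply Subtype.ext
  have h1 : (((List.range (m-1)).map (fun l => (swapW (k l) (k (m-1)) : WG Γ))).prod : W Γ)
      = ((List.range (m-1)).map
          (fun l => (SemidirectProduct.inr (Equiv.swap (k l) (k (m-1))) : W Γ))).prod := by
    show (WG Γ).subtype ((List.range (m-1)).map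
        (fun l => (swapW (k l) (k (m-1)) : WG Γ))).prod = _
    rw [map_list_prod ((WG Γ).subtype), List.map_map]
    rfl
  have h2 : ((List.range (m-1)).map
        (fun l => (SemidirectProduct.inr (Equiv.swap (k l) (k (m-1))) : W Γ))).prod
      = SemidirectProduct.inr
          (((List.range (m-1)).map (fun l => Equiv.swap (k l) (k (m-1)))).prod) := by
    rw [map_list_prod (SemidirectProduct.inr : Equiv.Perm ℕ →* W Γ), List.map_map]
    rfl
  show SemidirectProduct.inr (s : Equiv.Perm ℕ) = _
  rw [h1, h2, cycle_decomp m hm k hinj s hcyc hcyc0 hfix]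

variable {H : Type*} [NormedAddCommGroup H] [InnerProductSpace ℂ H] [CompleteSpace H]

theorem pi_perm_decomp (π : WG Γ →* (H →L[ℂ] H)) (m : ℕ) (hm : 2 ≤ m) (k : ℕ → ℕ)
    (hinj : ∀ a < m, ∀ b < m, k a = k b → a = b)
    (s : SInf)
    (hcyc : ∀ l, l + 1 < m → (s : Equiv.Perm ℕ) (k (l + 1)) = k l)
    (hcyc0 : (s : Equiv.Perm ℕ) (k 0) = k (m - 1))
    (hfix : ∀ i : ℕ, (∀ l < m, k l ≠ i) → (s : Equiv.Perm ℕ) i = i) :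
    π (permW s)
      = ((List.range (m-1)).map (fun l => π (swapW (k l) (k (m-1))))).prod := by
  rw [permW_decomp m hm k hinj s hcyc hcyc0 hfix, map_list_prod π, List.map_map]
  rfl

end PermDecomp
theorem statement_13 {Γ : Type*} [Group Γ] {H : Type*} [NormedAddCommGroup H]
    [InnerProductSpace ℂ H] [CompleteSpace H]
    (φ : WG Γ → ℂ) (hstate : IsState φ) (hcentral : IsSCentral φ)
    (π : WG Γ →* (H →L[ℂ] H)) (ξ : H) (hGNS : IsGNS φ π ξ)
    (hfact : IsFactorial π)
    (O : ℕ → (H →L[ℂ] H)) (hOsa : ∀ i, IsSelfAdjoint (O i))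
    (hO : ∀ (i : ℕ) (x y : H),
      Tendsto (fun j => ⟪y, π (swapW i j) x⟫) atTop (𝓝 ⟪y, O i x⟫))
    (m : ℕ) (hm : 2 ≤ m) (k : ℕ → ℕ)
    (hinj : ∀ a < m, ∀ b < m, k a = k b → a = b)
    (s : SInf)
    (hcyc : ∀ l, l + 1 < m → (s : Equiv.Perm ℕ) (k (l + 1)) = k l)
    (hcyc0 : (s : Equiv.Perm ℕ) (k 0) = k (m - 1))
    (hfix : ∀ i : ℕ, (∀ l < m, k l ≠ i) → (s : Equiv.Perm ℕ) i = i)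
    (V : ℕ → H →L[ℂ] H) (hV : ∀ l < m, V l ∈ Aj π (O (k l)) (k l)) :
    ⟪ξ, π (permW s) (((List.range m).map V).prod ξ)⟫ =
      ⟪ξ, (((List.range (m - 1)).map fun l =>
            π (swapW (k l) (k (m - 1))) * V l * π (swapW (k l) (k (m - 1))) *
              O (k (m - 1))).prod * V (m - 1)) ξ⟫ := by
  have hu := hGNS.unitary
  have hkne : ∀ x, x < m → ∀ y, y < m → x ≠ y → k x ≠ k y := by
    intro x hx y hy hxy h
    exact hxy (hinj x hx y hy h)
  -- abbreviations
  set Af : ℕ → (H →L[ℂ] H) := fun l => π (swapW (k l) (k (m - 1))) * V l with hAf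
  set Wf : ℕ → (H →L[ℂ] H) := fun l =>
    π (swapW (k l) (k (m - 1))) * V l * π (swapW (k l) (k (m - 1))) * O (k (m - 1)) with hWf
  -- step 1 : decompose π (permW s) and interleave
  have hdecomp := pi_perm_decomp π m hm k hinj s hcyc hcyc0 hfix
  have hVsplit : ((List.range m).map V).prod
      = ((List.range (m-1)).map V).prod * V (m-1) := by
    conv_lhs => rw [show m = (m-1)+1 by omega]
    rw [List.prod_range_succ]
  have hinterleave : ((List.range (m-1)).map (fun l => π (swapW (k l) (k (m-1))))).prod
      * ((List.range (m-1)).map V).prod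
      = ((List.range (m-1)).map Af).prod := by
    apply prod_mul_prod_interleave
    intro a b hab hbm
    exact (swap_comm_Aj (a := k b) (b := k (m-1)) (j := k a) hu hO
      (hkne b (by omega) a (by omega) (by omega))
      (hkne (m-1) (by omega) a (by omega) (by omega))
      (hV a (by omega))).symm
  have hop1 : π (permW s) * ((List.range m).map V).prod
      = ((List.range (m-1)).map Af).prod * V (m-1) := by
    rw [hdecomp, hVsplit, ← mul_assoc, hinterleave]
  -- memberships
  have hτmem : ∀ a b : ℕ, π (swapW a b) ∈ commutant (commutant (repSet π)) :=
    fun a b => subset_bicommutant _ (pi_mem_repSet _)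
  have hVmem : ∀ l, l < m → V l ∈ commutant (commutant (repSet π)) :=
    fun l hl => Aj_subset_bicommutant hO (k l) (hV l hl)
  have hAfmem : ∀ n, n ≤ m - 1 →
      ((List.range n).map Af).prod ∈ commutant (commutant (repSet π)) := by
    intro n hn
    apply prod_mem_commutant
    intro y hy
    obtain ⟨a, ha, rfl⟩ := List.mem_map.mp hy
    have ha' : a < m := by have := List.mem_range.mp ha; omega
    exact mul_mem_commutant (hτmem _ _) (hVmem a ha')
  have hWfmem : ∀ (L : List ℕ), (∀ l ∈ L, l < m - 1) →
      ((L.map Wf).prod ∈ commutant (commutant (repSet π))) := by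
    intro L hL
    apply prod_mem_commutant
    intro y hy
    obtain ⟨a, ha, rfl⟩ := List.mem_map.mp hy
    exact mul_mem_commutant (mul_mem_commutant (mul_mem_commutant (hτmem _ _)
      (hVmem a (by have := hL a ha; omega))) (hτmem _ _))
      (O_mem_bicommutant hO (k (m-1)))
  -- the key replacement step, in list form
  have hstep : ∀ n, n < m - 1 →
      ⟪ξ, (((List.range (n+1)).map Af).prod
          * ((List.range' (n+1) (m-1-(n+1))).map Wf).prod * V (m-1)) ξ⟫
      = ⟪ξ, (((List.range n).map Af).prod
          * ((List.range' n (m-1-n)).map Wf).prod * V (m-1)) ξ⟫ := by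
    intro n hn
    have htail : List.range' n (m-1-n) = n :: List.range' (n+1) (m-1-(n+1)) := by
      rw [show m-1-n = (m-1-(n+1))+1 by omega, List.range'_succ]
    set P : H →L[ℂ] H := ((List.range n).map Af).prod with hP
    set Q0 : H →L[ℂ] H := ((List.range' (n+1) (m-1-(n+1))).map Wf).prod with hQ0
    set Q : H →L[ℂ] H := Q0 * V (m-1) with hQ
    have hPmem : P ∈ commutant (commutant (repSet π)) := hAfmem n (by omega)
    have hQmem : Q ∈ commutant (commutant (repSet π)) := by
      refine mul_mem_commutant (hWfmem _ ?_) (hVmem (m-1) (by omega))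
      intro l hl
      have := List.mem_range'_1.mp hl
      omega
    have hkey := key_step (a := k n) (b := k (m-1)) (Vq := V n)
      hcentral hGNS hO
      (hkne n (by omega) (m-1) (by omega) (by omega))
      hPmem hQmem (hV n (by omega)) ?_
    · -- rewrite both sides into key_step's shape
      have hLop : ((List.range (n+1)).map Af).prod
          * ((List.range' (n+1) (m-1-(n+1))).map Wf).prod * V (m-1)
          = P * (π (swapW (k n) (k (m-1))) * V n) * Q := by
        rw [List.prod_range_succ, hQ, hQ0, hP, hAf]
        simp only [mul_assoc]
      have hRop : ((List.range n).map Af).prod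
          * ((List.range' n (m-1-n)).map Wf).prod * V (m-1)
          = P * (π (swapW (k n) (k (m-1))) * V n * π (swapW (k n) (k (m-1)))
              * O (k (m-1))) * Q := by
        rw [htail, List.map_cons, List.prod_cons, hQ, hQ0, hP, hWf]
        simp only [mul_assoc]
      rw [hLop, hRop]
      exact hkey.symm
    · -- the eventual commutations
      filter_upwards [eventually_gt_all m k] with j hj
      have hjne : ∀ l, l < m → k l ≠ j := fun l hl => Nat.ne_of_lt (hj l hl)
      refine ⟨hjne n (by omega), hjne (m-1) (by omega), ?_, ?_⟩
      · -- commutes with P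
        rw [hP]
        apply mul_list_prod_comm
        intro y hy
        obtain ⟨a, ha, rfl⟩ := List.mem_map.mp hy
        have ha' : a < n := List.mem_range.mp ha
        have h1 : π (swapW (k n) j) * π (swapW (k a) (k (m-1)))
            = π (swapW (k a) (k (m-1))) * π (swapW (k n) j) := by
          rw [← map_mul, ← map_mul, swapW_comm_disjoint
            (hkne a (by omega) n (by omega) (by omega)) (hjne a (by omega))
            (hkne (m-1) (by omega) n (by omega) (by omega)) (hjne (m-1) (by omega))]
        have h2 : π (swapW (k n) j) * V a = V a * π (swapW (k n) j) :=
          swap_comm_Aj (a := k n) (b := j) (j := k a) hu hO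
            (hkne n (by omega) a (by omega) (by omega))
            (Ne.symm (hjne a (by omega))) (hV a (by omega))
        rw [hAf]
        show π (swapW (k n) j) * (π (swapW (k a) (k (m-1))) * V a)
          = (π (swapW (k a) (k (m-1))) * V a) * π (swapW (k n) j)
        rw [← mul_assoc, h1, mul_assoc, h2, ← mul_assoc]
      · -- commutes with Q
        rw [hQ]
        have hOcomm : π (swapW (k n) j) * O (k (m-1))
            = O (k (m-1)) * π (swapW (k n) j) :=
          swap_comm_O hu hO (hkne n (by omega) (m-1) (by omega) (by omega))
            (Ne.symm (hjne (m-1) (by omega)))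
        have hVm : π (swapW (k n) j) * V (m-1) = V (m-1) * π (swapW (k n) j) :=
          swap_comm_Aj (a := k n) (b := j) (j := k (m-1)) hu hO
            (hkne n (by omega) (m-1) (by omega) (by omega))
            (Ne.symm (hjne (m-1) (by omega))) (hV (m-1) (by omega))
        have hQ0comm : π (swapW (k n) j) * Q0 = Q0 * π (swapW (k n) j) := by
          rw [hQ0]
          apply mul_list_prod_comm
          intro y hy
          obtain ⟨a, ha, rfl⟩ := List.mem_map.mp hy
          have ha' := List.mem_range'_1.mp ha
          have han : a ≠ n := by omega
          have ham : a < m - 1 := by omega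
          have h1 : π (swapW (k n) j) * π (swapW (k a) (k (m-1)))
              = π (swapW (k a) (k (m-1))) * π (swapW (k n) j) := by
            rw [← map_mul, ← map_mul, swapW_comm_disjoint
              (hkne a (by omega) n (by omega) (by omega)) (hjne a (by omega))
              (hkne (m-1) (by omega) n (by omega) (by omega)) (hjne (m-1) (by omega))]
          have h2 : π (swapW (k n) j) * V a = V a * π (swapW (k n) j) :=
            swap_comm_Aj (a := k n) (b := j) (j := k a) hu hO
              (hkne n (by omega) a (by omega) (by omega))
              (Ne.symm (hjne a (by omega))) (hV a (by omega))
          rw [hWf]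
          show π (swapW (k n) j) * (π (swapW (k a) (k (m-1))) * V a
              * π (swapW (k a) (k (m-1))) * O (k (m-1)))
            = (π (swapW (k a) (k (m-1))) * V a * π (swapW (k a) (k (m-1)))
              * O (k (m-1))) * π (swapW (k n) j)
          calc π (swapW (k n) j) * (π (swapW (k a) (k (m-1))) * V a
              * π (swapW (k a) (k (m-1))) * O (k (m-1)))
              = π (swapW (k n) j) * π (swapW (k a) (k (m-1))) * V a
                * π (swapW (k a) (k (m-1))) * O (k (m-1)) := by simp only [mul_assoc]
          _ = π (swapW (k a) (k (m-1))) * (π (swapW (k n) j) * V a)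
                * π (swapW (k a) (k (m-1))) * O (k (m-1)) := by rw [h1]; simp only [mul_assoc]
          _ = π (swapW (k a) (k (m-1))) * (V a * π (swapW (k n) j))
                * π (swapW (k a) (k (m-1))) * O (k (m-1)) := by rw [h2]
          _ = π (swapW (k a) (k (m-1))) * V a * (π (swapW (k n) j)
                * π (swapW (k a) (k (m-1)))) * O (k (m-1)) := by simp only [mul_assoc]
          _ = π (swapW (k a) (k (m-1))) * V a * (π (swapW (k a) (k (m-1)))
                * π (swapW (k n) j)) * O (k (m-1)) := by rw [h1]
          _ = π (swapW (k a) (k (m-1))) * V a * π (swapW (k a) (k (m-1)))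
                * (π (swapW (k n) j) * O (k (m-1))) := by simp only [mul_assoc]
          _ = π (swapW (k a) (k (m-1))) * V a * π (swapW (k a) (k (m-1)))
                * (O (k (m-1)) * π (swapW (k n) j)) := by rw [hOcomm]
          _ = _ := by simp only [mul_assoc]
        calc π (swapW (k n) j) * (Q0 * V (m-1))
            = (π (swapW (k n) j) * Q0) * V (m-1) := by rw [mul_assoc]
        _ = Q0 * (π (swapW (k n) j) * V (m-1)) := by rw [hQ0comm, mul_assoc]
        _ = (Q0 * V (m-1)) * π (swapW (k n) j) := by rw [hVm, mul_assoc]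
  -- chain the steps together
  have hchain : ∀ d, d ≤ m - 1 →
      ⟪ξ, (((List.range (m-1)).map Af).prod
          * ((List.range' (m-1) (m-1-(m-1))).map Wf).prod * V (m-1)) ξ⟫
      = ⟪ξ, (((List.range (m-1-d)).map Af).prod
          * ((List.range' (m-1-d) (m-1-(m-1-d))).map Wf).prod * V (m-1)) ξ⟫ := by
    intro d
    induction d with
    | zero => intro _; rfl
    | succ d ih =>
      intro hd
      have h1 := ih (by omega)
      have h2 := hstep (m-1-(d+1)) (by omega)
      rw [show m-1-(d+1)+1 = m-1-d by omega] at h2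
      rw [h1, h2]
  have hfinal := hchain (m-1) le_rfl
  rw [show m-1-(m-1) = 0 by omega] at hfinal
  simp only [Nat.sub_self, List.range'_zero, List.map_nil, List.prod_nil, mul_one,
    List.range_zero, one_mul] at hfinal
  -- assemble
  calc ⟪ξ, π (permW s) (((List.range m).map V).prod ξ)⟫
      = ⟪ξ, (π (permW s) * ((List.range m).map V).prod) ξ⟫ := rfl
  _ = ⟪ξ, (((List.range (m-1)).map Af).prod * V (m-1)) ξ⟫ := by rw [hop1]
  _ = ⟪ξ, (((List.range' 0 (m-1)).map Wf).prod * V (m-1)) ξ⟫ := hfinal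
  _ = ⟪ξ, (((List.range (m-1)).map Wf).prod * V (m-1)) ξ⟫ := by
      rw [← List.range_eq_range']

end DN
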